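/- Let q ≥ 2 be an integer, β a real number, p = 1 - e^{-β}, and G a finite simple graph with vertex set V and edge set E_G. Then Σ_{f : V → ZMod q} ∏_{{v,w} ∈ E_G} exp(β·1[f(v)=f(w)]) = e^{β|E_G|} · Σ_{H ⊆ E_G} p^{|H|}(1-p)^{|E_G|-|H|} q^{c(H)}, where c(H) is the number of connected components of the spanning subgraph with edge set H. (Fortuin–Kasteleyn expansion of the q-state Potts partition function.) -/
import Mathlib

open Finset

private lemma walk_const {V : Type*} {G' : SimpleGraph V} {α : Type*} {f : V → α}
    (hf : ∀ v w, G'.Adj v w → f v = f w) : ∀ {v w : V}, G'.Walk v w → f v = f w := by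
  intro v w p
  induction p with
  | nil => rfl
  | cons h _ ih => exact (hf _ _ h).trans ih

private lemma count_eq {V : Type*} [Fintype V] [DecidableEq V]
    (q : ℕ) [NeZero q] (G' : SimpleGraph V) :
    Nat.card {f : V → ZMod q // ∀ v w, G'.Adj v w → f v = f w}
      = q ^ Nat.card G'.ConnectedComponent := by
  have e : {f : V → ZMod q // ∀ v w, G'.Adj v w → f v = f w}
      ≃ (G'.ConnectedComponent → ZMod q) :=
    { toFun := fun f => SimpleGraph.ConnectedComponent.lift f.1
        (fun v w p _ => walk_const f.2 p)
      invFun := fun g => ⟨g ∘ G'.connectedComponentMk,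
        fun v w h => congrArg g (SimpleGraph.ConnectedComponent.sound h.reachable)⟩
      left_inv := fun f => Subtype.ext (funext fun v => rfl)
      right_inv := fun g => funext fun c => c.ind (fun v => rfl) }
  rw [Nat.card_congr e, Nat.card_fun, Nat.card_zmod]

/-- Fortuin–Kasteleyn expansion of the `q`-state Potts partition function:
`Σ_f ∏_{{v,w} ∈ E_G} exp(β·1[f v = f w])
  = e^{β|E_G|} · Σ_{H ⊆ E_G} p^{|H|}(1-p)^{|E_G|-|H|} q^{c(H)}`
where `c(H)` is the number of connected components of the spanning subgraph with
edge set `H` and `p = 1 - e^{-β}`. -/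
theorem potts_partition_fk_expansion
    (q : ℕ) (hq : 2 ≤ q) [NeZero q] (β p : ℝ) (hp : p = 1 - Real.exp (-β))
    (V : Type*) [Fintype V] [DecidableEq V]
    (G : SimpleGraph V) [DecidableRel G.Adj] :
    ∑ f : V → ZMod q,
        ∏ e ∈ G.edgeFinset, Real.exp (β * (if (e.map f).IsDiag then 1 else 0))
      = Real.exp (β * G.edgeFinset.card) *
          ∑ H ∈ G.edgeFinset.powerset,
            p ^ H.card * (1 - p) ^ (G.edgeFinset.card - H.card) *
              (q : ℝ) ^
                Nat.card (SimpleGraph.fromEdgeSet (↑H : Set (Sym2 V))).ConnectedComponent := by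
  classical
  have key : ∀ H ∈ G.edgeFinset.powerset,
      (∑ f : V → ZMod q, ∏ e ∈ H, (if (Sym2.map f e).IsDiag then (1:ℝ) else 0))
        = (q:ℝ) ^ Nat.card (SimpleGraph.fromEdgeSet (↑H : Set (Sym2 V))).ConnectedComponent := by
    intro H hH
    rw [Finset.mem_powerset] at hH
    have hiff : ∀ f : V → ZMod q,
        (∀ e ∈ H, (Sym2.map f e).IsDiag) ↔
          (∀ v w, (SimpleGraph.fromEdgeSet (↑H : Set (Sym2 V))).Adj v w → f v = f w) := by
      intro f
      constructor
      · intro h v w hvw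
        rw [SimpleGraph.fromEdgeSet_adj] at hvw
        have := h _ hvw.1
        simpa using this
      · intro h e he
        induction e with
        | _ v w =>
          have hne : v ≠ w := by
            intro hvw
            have hmem := hH he
            rw [SimpleGraph.mem_edgeFinset] at hmem
            exact (G.not_isDiag_of_mem_edgeSet hmem) (by simp [hvw])
          have hfvw : f v = f w :=
            h v w (by rw [SimpleGraph.fromEdgeSet_adj]; exact ⟨he, hne⟩)
          simp [hfvw]
    calc ∑ f : V → ZMod q, ∏ e ∈ H, (if (Sym2.map f e).IsDiag then (1:ℝ) else 0)
        = ∑ f : V → ZMod q, (if ∀ e ∈ H, (Sym2.map f e).IsDiag then (1:ℝ) else 0) := by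
          refine Finset.sum_congr rfl fun f _ => ?_
          rw [Finset.prod_boole]
          congr
      _ = ((Finset.univ.filter
              fun f : V → ZMod q => ∀ e ∈ H, (Sym2.map f e).IsDiag).card : ℝ) := by
          rw [Finset.sum_boole]
      _ = ((q : ℝ)) ^ Nat.card
            (SimpleGraph.fromEdgeSet (↑H : Set (Sym2 V))).ConnectedComponent := by
          rw [← Fintype.card_subtype]
          rw [← Nat.card_eq_fintype_card]
          rw [Nat.card_congr (Equiv.subtypeEquivRight hiff)]
          rw [count_eq]
          push_cast
          ring
  have hfactor : ∀ f : V → ZMod q,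
      ∏ e ∈ G.edgeFinset, Real.exp (β * (if (Sym2.map f e).IsDiag then (1:ℝ) else 0))
        = Real.exp (β * G.edgeFinset.card) *
          ∑ H ∈ G.edgeFinset.powerset,
            p ^ H.card * (1 - p) ^ (G.edgeFinset.card - H.card) *
              ∏ e ∈ H, (if (Sym2.map f e).IsDiag then (1:ℝ) else 0) := by
    intro f
    have h1 : ∀ e ∈ G.edgeFinset,
        Real.exp (β * (if (Sym2.map f e).IsDiag then (1:ℝ) else 0))
          = Real.exp β * (p * (if (Sym2.map f e).IsDiag then (1:ℝ) else 0) + (1 - p)) := by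
      intro e _
      by_cases hd : (Sym2.map f e).IsDiag
      · simp [hd, hp]
      · simp only [hd, if_false, mul_zero, zero_add, mul_zero]
        rw [hp]
        rw [sub_sub_cancel, ← Real.exp_add]
        simp
    rw [Finset.prod_congr rfl h1, Finset.prod_mul_distrib, Finset.prod_const,
      Finset.prod_add]
    have h2 : Real.exp β ^ G.edgeFinset.card = Real.exp (β * G.edgeFinset.card) := by
      rw [mul_comm, Real.exp_nat_mul]
    rw [h2]
    congr 1
    refine Finset.sum_congr rfl fun H hH => ?_
    rw [Finset.mem_powerset] at hH
    rw [Finset.prod_mul_distrib, Finset.prod_const, Finset.prod_const,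
      Finset.card_sdiff_of_subset hH]
    ring
  calc ∑ f : V → ZMod q,
        ∏ e ∈ G.edgeFinset, Real.exp (β * (if (Sym2.map f e).IsDiag then (1:ℝ) else 0))
      = ∑ f : V → ZMod q, Real.exp (β * G.edgeFinset.card) *
          ∑ H ∈ G.edgeFinset.powerset,
            p ^ H.card * (1 - p) ^ (G.edgeFinset.card - H.card) *
              ∏ e ∈ H, (if (Sym2.map f e).IsDiag then (1:ℝ) else 0) :=
        Finset.sum_congr rfl fun f _ => hfactor f
    _ = Real.exp (β * G.edgeFinset.card) *
          ∑ H ∈ G.edgeFinset.powerset,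
            p ^ H.card * (1 - p) ^ (G.edgeFinset.card - H.card) *
              ∑ f : V → ZMod q, ∏ e ∈ H, (if (Sym2.map f e).IsDiag then (1:ℝ) else 0) := by
        rw [← Finset.mul_sum]
        congr 1
        rw [Finset.sum_comm]
        refine Finset.sum_congr rfl fun H _ => ?_
        rw [← Finset.mul_sum]
    _ = Real.exp (β * G.edgeFinset.card) *
          ∑ H ∈ G.edgeFinset.powerset,
            p ^ H.card * (1 - p) ^ (G.edgeFinset.card - H.card) *
              (q : ℝ) ^
                Nat.card (SimpleGraph.fromEdgeSet (↑H : Set (Sym2 V))).ConnectedComponent := by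
        congr 1
        exact Finset.sum_congr rfl fun H hH => by rw [key H hH]
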